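/- Let G be a labeled graph on [n] with 12-representant w, and let b be a bad vertex of G (there exist a < b < c with ab and bc non-edges and ac an edge). Then the letter b occurs at least twice in w. -/
import Mathlib


/-- Some occurrence of `i` comes strictly before some occurrence of `j` in `w`. -/
def Occ {n : ℕ} (w : List (Fin n)) (i j : Fin n) : Prop :=
  ∃ p q : Fin w.length, p < q ∧ w.get p = i ∧ w.get q = j

/-- The word `w` over `[n]` 12-represents the labeled graph `G` on `Fin n`:
every letter occurs at least once, and for `i < j`, `i` and `j` are adjacent
iff no occurrence of `i` comes before any occurrence of `j`. -/
def Represents {n : ℕ} (G : SimpleGraph (Fin n)) (w : List (Fin n)) : Prop :=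
  (∀ v : Fin n, v ∈ w) ∧ ∀ i j : Fin n, i < j → (G.Adj i j ↔ ¬ Occ w i j)

/-- `b` is a bad vertex of `G`. -/
def Bad {n : ℕ} (G : SimpleGraph (Fin n)) (b : Fin n) : Prop :=
  ∃ a c : Fin n, a < b ∧ b < c ∧ ¬ G.Adj a b ∧ ¬ G.Adj b c ∧ G.Adj a c

theorem stmt3 (n : ℕ) (G : SimpleGraph (Fin n)) (w : List (Fin n))
    (hw : Represents G w) (b : Fin n) (hb : Bad G b) :
    2 ≤ w.count b := by
  obtain ⟨a, c, hab, hbc, hnab, hnbc, hac⟩ := hb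
  have hocc_ab : Occ w a b := by
    by_contra h
    exact hnab ((hw.2 a b hab).mpr h)
  have hocc_bc : Occ w b c := by
    by_contra h
    exact hnbc ((hw.2 b c hbc).mpr h)
  have hnocc_ac : ¬ Occ w a c := (hw.2 a c (hab.trans hbc)).mp hac
  obtain ⟨p1, q1, hpq1, hp1, hq1⟩ := hocc_ab
  obtain ⟨p2, q2, hpq2, hp2, hq2⟩ := hocc_bc
  have hne : q1 ≠ p2 := by
    intro h
    exact hnocc_ac ⟨p1, q2, lt_trans (h ▸ hpq1) hpq2, hp1, hq2⟩
  rw [← List.duplicate_iff_two_le_count]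
  rcases lt_or_gt_of_ne hne with h | h
  · exact List.duplicate_iff_exists_distinct_get.mpr ⟨q1, p2, h, hq1.symm, hp2.symm⟩
  · exact List.duplicate_iff_exists_distinct_get.mpr ⟨p2, q1, h, hp2.symm, hq1.symm⟩
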